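/- Let F be the distribution function of risk-neutral log-returns with ∫ e^x dF(x) = 1, and let V(k) denote the implied volatility at log-strike k. If −log F(−k)/k → q* as k → ∞ for some q* ∈ (0,∞), then V(−k)²/k → ψ(q*) as k → ∞. -/

import Mathlib

open Filter MeasureTheory Real Set Topology

/-- The standard normal distribution function `Φ`. -/
noncomputable def Phi (x : ℝ) : ℝ :=
  ∫ t in Set.Iic x, Real.exp (-(t ^ 2) / 2) / Real.sqrt (2 * Real.pi)

/-- The normalized Black–Scholes call price `c_BS(k, σ) = Φ(d₁) - e^k Φ(d₂)`,
`d₁ = -k/σ + σ/2`, `d₂ = -k/σ - σ/2`. -/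
noncomputable def cBS (k σ : ℝ) : ℝ :=
  Phi (-k / σ + σ / 2) - Real.exp k * Phi (-k / σ - σ / 2)

/-- `ψ(x) = 2 - 4(√(x² + x) - x)`. -/
noncomputable def psi (x : ℝ) : ℝ := 2 - 4 * (Real.sqrt (x ^ 2 + x) - x)


noncomputable def gpdf (t : ℝ) : ℝ := Real.exp (-(t ^ 2) / 2) / Real.sqrt (2 * Real.pi)

lemma sqrt_two_pi_pos : 0 < Real.sqrt (2 * Real.pi) := Real.sqrt_pos.2 (by positivity)

lemma gpdf_pos (t : ℝ) : 0 < gpdf t := div_pos (Real.exp_pos _) sqrt_two_pi_pos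

lemma gpdf_even (t : ℝ) : gpdf (-t) = gpdf t := by simp [gpdf]

lemma gpdf_eq (t : ℝ) :
    gpdf t = Real.exp (-(1/2) * t ^ 2) * (Real.sqrt (2 * Real.pi))⁻¹ := by
  rw [gpdf, div_eq_mul_inv]
  congr 2
  ring

lemma integrable_gpdf : Integrable gpdf := by
  have h := (integrable_exp_neg_mul_sq (by norm_num : (0:ℝ) < 1/2)).mul_const
    (Real.sqrt (2 * Real.pi))⁻¹
  exact h.congr (by filter_upwards with t using (gpdf_eq t).symm)

lemma integrable_mul_gpdf : Integrable (fun t : ℝ => t * gpdf t) := by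
  have h := (integrable_mul_exp_neg_mul_sq (by norm_num : (0:ℝ) < 1/2)).mul_const
    (Real.sqrt (2 * Real.pi))⁻¹
  exact h.congr (by filter_upwards with t; rw [mul_assoc, ← gpdf_eq t])

lemma integral_gpdf : ∫ t, gpdf t = 1 := by
  have h : ∫ t : ℝ, Real.exp (-(1/2) * t ^ 2) = Real.sqrt (2 * Real.pi) := by
    rw [integral_gaussian]
    congr 1
    rw [div_div_eq_mul_div, div_one]
    ring
  calc ∫ t, gpdf t = (∫ t : ℝ, Real.exp (-(1/2) * t ^ 2)) * (Real.sqrt (2 * Real.pi))⁻¹ := by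
        rw [← integral_mul_const]; exact integral_congr_ae (by filter_upwards with t using gpdf_eq t)
    _ = 1 := by rw [h]; exact mul_inv_cancel₀ (ne_of_gt sqrt_two_pi_pos)

lemma hasDerivAt_gpdf (t : ℝ) : HasDerivAt gpdf (-t * gpdf t) t := by
  have h1 : HasDerivAt (fun s : ℝ => -(s ^ 2) / 2) (-t) t := by
    have := ((hasDerivAt_pow 2 t).neg).div_const 2
    simpa using this.congr_deriv (by ring)
  have h2 := h1.exp
  have h3 := h2.div_const (Real.sqrt (2 * Real.pi))
  refine h3.congr_deriv ?_
  unfold gpdf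
  ring

lemma tendsto_gpdf_atTop : Tendsto gpdf atTop (𝓝 0) := by
  have h1 : Tendsto (fun t : ℝ => -(t ^ 2) / 2) atTop atBot := by
    apply Tendsto.atBot_div_const (by norm_num : (0:ℝ) < 2)
    exact tendsto_neg_atTop_atBot.comp (tendsto_pow_atTop (by norm_num))
  have h2 := (Real.tendsto_exp_atBot.comp h1).div_const (Real.sqrt (2 * Real.pi))
  rw [zero_div] at h2
  exact h2

lemma tendsto_gpdf_atBot : Tendsto gpdf atBot (𝓝 0) := by
  have h := tendsto_gpdf_atTop.comp tendsto_neg_atBot_atTop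
  have : (gpdf ∘ fun t : ℝ => -t) = gpdf := by funext t; exact gpdf_even t
  rwa [this] at h


lemma Phi_def (x : ℝ) : Phi x = ∫ t in Set.Iic x, gpdf t := rfl

lemma Phi_nonneg (x : ℝ) : 0 ≤ Phi x :=
  setIntegral_nonneg measurableSet_Iic fun t _ => (gpdf_pos t).le

lemma Phi_mono : Monotone Phi := by
  intro a b hab
  rw [Phi_def, Phi_def]
  exact setIntegral_mono_set integrable_gpdf.integrableOn
    (ae_of_all _ fun t => (gpdf_pos t).le) (HasSubset.Subset.eventuallyLE (Iic_subset_Iic.2 hab))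

lemma Phi_neg_eq_Ioi (x : ℝ) : Phi (-x) = ∫ t in Set.Ioi x, gpdf t := by
  have h := integral_comp_neg_Iic (-x) gpdf
  simp only [neg_neg] at h
  rw [Phi_def, ← h]
  exact integral_congr_ae (ae_of_all _ fun t => (gpdf_even t).symm)

lemma Phi_neg (x : ℝ) : Phi (-x) = 1 - Phi x := by
  rw [Phi_neg_eq_Ioi, Phi_def, eq_sub_iff_add_eq, add_comm]
  rw [intervalIntegral.integral_Iic_add_Ioi integrable_gpdf.integrableOn integrable_gpdf.integrableOn]
  exact integral_gpdf

lemma Phi_le_one (x : ℝ) : Phi x ≤ 1 := by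
  have h := Phi_nonneg (-x)
  rw [Phi_neg] at h
  linarith

lemma mills_upper {x : ℝ} (hx : 0 < x) : Phi (-x) ≤ gpdf x / x := by
  have key : ∫ t in Set.Iic (-x), (-t) * gpdf t = gpdf x := by
    have h := integral_Iic_of_hasDerivAt_of_tendsto' (f := gpdf)
      (f' := fun t => -t * gpdf t) (a := -x)
      (fun t _ => hasDerivAt_gpdf t)
      ((integrable_mul_gpdf.neg.congr (ae_of_all _ fun t => by show -(t * gpdf t) = -t * gpdf t; ring)).integrableOn)
      tendsto_gpdf_atBot
    rw [h, sub_zero, gpdf_even]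
  have hmul : x * Phi (-x) ≤ gpdf x := by
    rw [← key, Phi_def, ← integral_const_mul]
    apply setIntegral_mono_on
    · exact (integrable_gpdf.const_mul x).integrableOn
    · exact (integrable_mul_gpdf.neg.congr (ae_of_all _ fun t => by show -(t * gpdf t) = -t * gpdf t; ring)).integrableOn
    · exact measurableSet_Iic
    · intro t ht
      exact mul_le_mul_of_nonneg_right (by linarith [mem_Iic.1 ht]) (gpdf_pos t).le
  rw [le_div_iff₀ hx]
  linarith [hmul]

lemma mills_lower (x : ℝ) : x / (1 + x ^ 2) * gpdf x ≤ Phi (-x) := by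
  set m : ℝ → ℝ := fun t => -(t / (1 + t ^ 2) * gpdf t) with hm
  set m' : ℝ → ℝ := fun t => (t ^ 4 + 2 * t ^ 2 - 1) / (1 + t ^ 2) ^ 2 * gpdf t with hm'
  have hden : ∀ t : ℝ, (1 : ℝ) + t ^ 2 ≠ 0 := fun t => by positivity
  have hderiv : ∀ t : ℝ, HasDerivAt m (m' t) t := by
    intro t
    have h1 : HasDerivAt (fun t : ℝ => t / (1 + t ^ 2))
        ((1 * (1 + t ^ 2) - t * (2 * t)) / (1 + t ^ 2) ^ 2) t := by
      exact (hasDerivAt_id t).div (((hasDerivAt_pow 2 t).const_add 1).congr_deriv (by ring))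
        (hden t)
    have h2 := (h1.mul (hasDerivAt_gpdf t)).neg
    refine h2.congr_deriv ?_
    simp only [hm']
    field_simp
    ring
  have hratio : ∀ t : ℝ, |(t ^ 4 + 2 * t ^ 2 - 1) / (1 + t ^ 2) ^ 2| ≤ 1 := by
    intro t
    rw [abs_div, div_le_one (by positivity)]
    rw [abs_of_nonneg (by positivity : (0:ℝ) ≤ (1 + t ^ 2) ^ 2)]
    rw [abs_le]
    constructor <;> nlinarith [sq_nonneg t, sq_nonneg (t^2)]
  have hint : IntegrableOn m' (Set.Ioi x) := by
    apply (integrable_gpdf.mono' ?_ ?_).integrableOn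
    · apply Continuous.aestronglyMeasurable
      have : Continuous gpdf := by
        have := integrable_gpdf
        exact (Real.continuous_exp.comp (by continuity)).div_const _
      exact ((continuous_pow 4).add (continuous_const.mul (continuous_pow 2)) |>.sub
        continuous_const).div ((continuous_const.add (continuous_pow 2)).pow 2)
        (fun t => pow_ne_zero 2 (hden t)) |>.mul this
    · filter_upwards with t
      rw [hm', norm_mul, Real.norm_eq_abs, Real.norm_eq_abs, abs_of_pos (gpdf_pos t)]
      exact mul_le_of_le_one_left (gpdf_pos t).le (hratio t)
  have hlim : Tendsto m atTop (𝓝 0) := by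
    apply squeeze_zero_norm ?_ tendsto_gpdf_atTop
    intro t
    rw [hm, norm_neg, norm_mul, Real.norm_eq_abs, Real.norm_eq_abs, abs_of_pos (gpdf_pos t)]
    apply mul_le_of_le_one_left (gpdf_pos t).le
    rw [abs_div, div_le_one (by positivity), abs_of_nonneg (by positivity : (0:ℝ) ≤ 1 + t^2)]
    nlinarith [abs_nonneg t, sq_abs t, sq_nonneg (|t| - 1)]
  have key : ∫ t in Set.Ioi x, m' t = x / (1 + x ^ 2) * gpdf x := by
    rw [integral_Ioi_of_hasDerivAt_of_tendsto' (fun t _ => hderiv t) hint hlim]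
    simp [hm]
  rw [← key, Phi_neg_eq_Ioi]
  apply setIntegral_mono_on hint integrable_gpdf.integrableOn measurableSet_Ioi
  intro t _
  rw [hm']
  apply mul_le_of_le_one_left (gpdf_pos t).le
  calc (t ^ 4 + 2 * t ^ 2 - 1) / (1 + t ^ 2) ^ 2 ≤ |(t ^ 4 + 2 * t ^ 2 - 1) / (1 + t ^ 2) ^ 2| :=
        le_abs_self _
    _ ≤ 1 := hratio t

lemma Phi_neg_one_pos : 0 < Phi (-1) := by
  have h := mills_lower 1
  have := gpdf_pos 1
  nlinarith

section
variable (F : StieltjesFunction ℝ) (qstar : ℝ) (hq : 0 < qstar)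
  (htail : Tendsto (fun k => -Real.log (F (-k)) / k) atTop (nhds qstar))

include htail hq in
lemma F_tendsto_bot : Tendsto F atBot (𝓝 0) := by
  have hFsmall : ∀ᶠ k in atTop, |F (-k)| ≤ Real.exp (-(qstar / 2) * k) := by
    have h1 : ∀ᶠ k in atTop, qstar / 2 < -Real.log (F (-k)) / k :=
      htail.eventually (eventually_gt_nhds (by linarith))
    filter_upwards [h1, eventually_gt_atTop (0 : ℝ)] with k hk hk0
    have hlog : Real.log (F (-k)) < -(qstar / 2) * k := by
      have h2 : qstar / 2 * k < -Real.log (F (-k)) := by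
        have := (lt_div_iff₀ hk0).1 hk
        linarith
      linarith
    rcases eq_or_ne (F (-k)) 0 with h0 | h0
    · rw [h0, abs_zero]; positivity
    · calc |F (-k)| = Real.exp (Real.log |F (-k)|) := (Real.exp_log (abs_pos.2 h0)).symm
        _ = Real.exp (Real.log (F (-k))) := by rw [Real.log_abs]
        _ ≤ Real.exp (-(qstar / 2) * k) := Real.exp_le_exp.2 hlog.le
  have hexp : Tendsto (fun k : ℝ => Real.exp (-(qstar / 2) * k)) atTop (𝓝 0) := by
    apply Real.tendsto_exp_atBot.comp
    exact Tendsto.const_mul_atTop_of_neg (by linarith) tendsto_id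
  have hFneg0 : Tendsto (fun k : ℝ => F (-k)) atTop (𝓝 0) := by
    apply squeeze_zero_norm' _ hexp
    filter_upwards [hFsmall] with k hk using hk
  have h := hFneg0.comp tendsto_neg_atBot_atTop
  have heq : ((fun k : ℝ => F (-k)) ∘ fun x : ℝ => -x) = fun x => F x := by
    funext x; simp
  rwa [heq] at h

include htail hq in
lemma F_pos (k : ℝ) : 0 < F (-k) := by
  have hbot := F_tendsto_bot F qstar hq htail
  have hnn : ∀ x, 0 ≤ F x := by
    intro x
    apply le_of_tendsto hbot
    filter_upwards [eventually_le_atBot x] with y hy using F.mono hy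
  rcases (hnn (-k)).lt_or_eq with h | h
  · exact h
  · exfalso
    have hzero : ∀ᶠ m in atTop, -Real.log (F (-m)) / m = 0 := by
      filter_upwards [eventually_ge_atTop k] with m hm
      have : F (-m) = 0 := le_antisymm (h ▸ F.mono (by linarith)) (hnn _)
      simp [this]
    have : Tendsto (fun m => -Real.log (F (-m)) / m) atTop (𝓝 0) :=
      Tendsto.congr' (by filter_upwards [hzero] with m hm using hm.symm) tendsto_const_nhds
    exact hq.ne' (tendsto_nhds_unique htail this)
end

section
variable {μ : Measure ℝ} [IsProbabilityMeasure μ]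

-- put price lower/upper bounds
lemma put_upper (hint : Integrable (fun x => Real.exp x) μ) (k : ℝ) (Fk : ℝ)
    (hFk : (μ (Iic (-k))).toReal = Fk) :
    ∫ x in Iic (-k), (Real.exp (-k) - Real.exp x) ∂μ ≤ Real.exp (-k) * Fk := by
  have h1 : ∫ x in Iic (-k), (Real.exp (-k) - Real.exp x) ∂μ
      ≤ ∫ _x in Iic (-k), Real.exp (-k) ∂μ := by
    apply setIntegral_mono_on ((integrable_const _).sub hint).integrableOn
      (integrable_const _).integrableOn measurableSet_Iic
    intro x _
    simp only [Pi.sub_apply]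
    linarith [Real.exp_pos x]
  rw [setIntegral_const, smul_eq_mul, measureReal_def, hFk] at h1
  linarith [h1]

lemma put_lower (hint : Integrable (fun x => Real.exp x) μ) {k m : ℝ} (hkm : k ≤ m) (Fm : ℝ)
    (hFm : (μ (Iic (-m))).toReal = Fm) :
    (Real.exp (-k) - Real.exp (-m)) * Fm ≤ ∫ x in Iic (-k), (Real.exp (-k) - Real.exp x) ∂μ := by
  have h1 : ∫ _x in Iic (-m), (Real.exp (-k) - Real.exp (-m)) ∂μ
      ≤ ∫ x in Iic (-m), (Real.exp (-k) - Real.exp x) ∂μ := by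
    apply setIntegral_mono_on (integrable_const _).integrableOn
      ((integrable_const _).sub hint).integrableOn measurableSet_Iic
    intro x hx
    simp only [Pi.sub_apply]
    have : Real.exp x ≤ Real.exp (-m) := Real.exp_le_exp.2 (mem_Iic.1 hx)
    linarith
  have h2 : ∫ x in Iic (-m), (Real.exp (-k) - Real.exp x) ∂μ
      ≤ ∫ x in Iic (-k), (Real.exp (-k) - Real.exp x) ∂μ := by
    apply setIntegral_mono_set ((integrable_const _).sub hint).integrableOn
    · filter_upwards [ae_restrict_mem measurableSet_Iic] with x hx
      have : Real.exp x ≤ Real.exp (-k) := Real.exp_le_exp.2 (mem_Iic.1 hx)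
      simp only [Pi.zero_apply, Pi.sub_apply]
      linarith
    · exact HasSubset.Subset.eventuallyLE (Iic_subset_Iic.2 (neg_le_neg hkm))
  rw [setIntegral_const, smul_eq_mul, measureReal_def, hFm] at h1
  nlinarith [h1, h2]

end

lemma L_tendsto (P G : ℝ → ℝ) (q : ℝ) (hq : 0 < q)
    (hPpos : ∀ k, 0 < P k) (hGpos : ∀ k, 0 < G k)
    (hub : ∀ k, P k ≤ Real.exp (-k) * G k)
    (hlb : ∀ k m, k ≤ m → (Real.exp (-k) - Real.exp (-m)) * G m ≤ P k)
    (htail : Tendsto (fun k => -Real.log (G k) / k) atTop (𝓝 q)) :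
    Tendsto (fun k => -Real.log (P k) / k) atTop (𝓝 (1 + q)) := by
  refine Metric.tendsto_nhds.2 fun δ hδ => ?_
  set ε := δ / (2 * (q + 1)) with hε_def
  have hε : 0 < ε := by positivity
  -- lower bound events
  have hlow : ∀ᶠ k in atTop, q - δ / 2 < -Real.log (G k) / k :=
    htail.eventually (eventually_gt_nhds (by linarith))
  -- upper bound events
  have hg : Tendsto (fun k => -Real.log (G ((1 + ε) * k)) / ((1 + ε) * k)) atTop (𝓝 q) := by
    have hcomp : Tendsto (fun k : ℝ => (1 + ε) * k) atTop atTop :=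
      Tendsto.const_mul_atTop (by linarith) tendsto_id
    exact htail.comp hcomp
  have hgm : ∀ᶠ k in atTop,
      (1 + ε) * (-Real.log (G ((1 + ε) * k)) / ((1 + ε) * k)) < (1 + ε) * q + δ / 4 :=
    (hg.const_mul (1 + ε)).eventually (eventually_lt_nhds (by nlinarith))
  have hlog1 : Tendsto (fun k => -Real.log (1 - Real.exp (-(ε * k))) / k) atTop (𝓝 0) := by
    have hexp : Tendsto (fun k : ℝ => Real.exp (-(ε * k))) atTop (𝓝 0) := by
      apply Real.tendsto_exp_atBot.comp
      exact tendsto_neg_atTop_atBot.comp (Tendsto.const_mul_atTop hε tendsto_id)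
    have hnum : Tendsto (fun k => -Real.log (1 - Real.exp (-(ε * k)))) atTop (𝓝 0) := by
      have h1 : Tendsto (fun k : ℝ => 1 - Real.exp (-(ε * k))) atTop (𝓝 1) := by
        simpa using (tendsto_const_nhds (x := (1:ℝ))).sub hexp
      have h2 := ((Real.continuousAt_log one_ne_zero).tendsto.comp h1).neg
      simpa using h2
    have := hnum.mul tendsto_inv_atTop_zero
    simpa [div_eq_mul_inv] using this
  have hεk : ∀ᶠ k in atTop, Real.exp (-(ε * k)) < 1 := by
    filter_upwards [eventually_gt_atTop (0:ℝ)] with k hk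
    rw [Real.exp_lt_one_iff]
    nlinarith
  filter_upwards [hlow, hgm, hlog1.eventually (eventually_lt_nhds (show (0:ℝ) < δ/4 by linarith)),
    hεk, eventually_gt_atTop (0:ℝ)] with k h1 h2 h3 h4 hk0
  have hkne : k ≠ 0 := hk0.ne'
  rw [Real.dist_eq, abs_sub_lt_iff]
  constructor
  · -- upper bound : L k - (1+q) < δ
    have hlbk := hlb k ((1 + ε) * k) (by nlinarith)
    have hsplit : Real.exp (-((1 + ε) * k)) = Real.exp (-k) * Real.exp (-(ε * k)) := by
      rw [← Real.exp_add]; ring_nf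
    have hR : Real.exp (-k) * ((1 - Real.exp (-(ε * k))) * G ((1 + ε) * k)) ≤ P k := by
      rw [hsplit] at hlbk
      nlinarith [hlbk]
    have hpos2 : 0 < 1 - Real.exp (-(ε * k)) := by linarith
    have hlogP : -Real.log (P k) ≤ k + -Real.log (1 - Real.exp (-(ε * k)))
        + -Real.log (G ((1 + ε) * k)) := by
      have := Real.log_le_log (mul_pos (Real.exp_pos _) (mul_pos hpos2 (hGpos _))) hR
      rw [Real.log_mul (Real.exp_pos _).ne' (mul_pos hpos2 (hGpos _)).ne',
        Real.log_mul hpos2.ne' (hGpos _).ne', Real.log_exp] at this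
      linarith
    have hLk : -Real.log (P k) / k ≤ 1 + -Real.log (1 - Real.exp (-(ε * k))) / k
        + (1 + ε) * (-Real.log (G ((1 + ε) * k)) / ((1 + ε) * k)) := by
      have h5 : (1 + ε) * (-Real.log (G ((1 + ε) * k)) / ((1 + ε) * k))
          = -Real.log (G ((1 + ε) * k)) / k := by
        field_simp
      rw [h5]
      have hdiv : -Real.log (P k) / k ≤ (k + -Real.log (1 - Real.exp (-(ε * k)))
          + -Real.log (G ((1 + ε) * k))) / k := by
        gcongr
      calc -Real.log (P k) / k ≤ _ := hdiv
        _ = 1 + -Real.log (1 - Real.exp (-(ε * k))) / k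
            + -Real.log (G ((1 + ε) * k)) / k := by field_simp
    have hεq : ε * q < δ / 2 := by
      rw [hε_def, div_mul_eq_mul_div, div_lt_iff₀ (by positivity)]
      nlinarith
    have h6 : (1 + ε) * (-Real.log (G ((1 + ε) * k)) / ((1 + ε) * k)) < (1 + ε) * q + δ / 4 := h2
    nlinarith [hLk, h3, h6]
  · -- lower bound : (1+q) - L k < δ
    have hlogP : k + -Real.log (G k) ≤ -Real.log (P k) := by
      have := Real.log_le_log (hPpos k) (hub k)
      rw [Real.log_mul (Real.exp_pos _).ne' (hGpos _).ne', Real.log_exp] at this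
      linarith
    have hdiv : (k + -Real.log (G k)) / k ≤ -Real.log (P k) / k := by gcongr
    have h7 : (k + -Real.log (G k)) / k = 1 + -Real.log (G k) / k := by field_simp
    rw [h7] at hdiv
    linarith [h1, hdiv]

lemma sqrt2pi_le_3 : Real.sqrt (2 * Real.pi) ≤ 3 := by
  have h1 := Real.sq_sqrt (by positivity : (0:ℝ) ≤ 2 * Real.pi)
  have h2 := Real.sqrt_nonneg (2 * Real.pi)
  nlinarith [Real.pi_le_four]

lemma one_le_sqrt2pi : 1 ≤ Real.sqrt (2 * Real.pi) := by
  have h1 := Real.sq_sqrt (by positivity : (0:ℝ) ≤ 2 * Real.pi)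
  have h2 := Real.sqrt_nonneg (2 * Real.pi)
  nlinarith [Real.pi_gt_three]

lemma psi_eq {k s : ℝ} (hk : 0 < k) (hs : 0 < s) (hx : 0 < k / s - s / 2) :
    psi ((k / s - s / 2) ^ 2 / (2 * k)) = s ^ 2 / k := by
  have hks : s ^ 2 < 2 * k := by
    have h := mul_pos hx hs
    rw [sub_mul, div_mul_cancel₀ _ hs.ne'] at h
    nlinarith
  set u := (k / s - s / 2) ^ 2 / (2 * k) with hu
  have hu0 : 0 ≤ u := by positivity
  have hβ : s ^ 2 / k < 2 := by rw [div_lt_iff₀ hk]; linarith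
  have key : Real.sqrt (u ^ 2 + u) = (2 + 4 * u - s ^ 2 / k) / 4 := by
    have h1 : u ^ 2 + u = ((2 + 4 * u - s ^ 2 / k) / 4) ^ 2 := by
      rw [hu]; field_simp; ring
    rw [h1, Real.sqrt_sq (by linarith)]
  rw [psi, key]; ring

set_option maxHeartbeats 2000000 in
lemma BS_side (P σ : ℝ → ℝ) (q : ℝ) (hq : 0 < q)
    (hσ : ∀ k, 0 < σ k)
    (hPpos : ∀ k, 0 < P k)
    (hPBS : ∀ k, 0 < k →
      P k = Real.exp (-k) * Phi (-(k / σ k - σ k / 2)) - Phi (-(k / σ k + σ k / 2)))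
    (hL : Tendsto (fun k => -Real.log (P k) / k) atTop (𝓝 (1 + q))) :
    Tendsto (fun k => σ k ^ 2 / k) atTop (𝓝 (psi q)) := by
  set X : ℝ → ℝ := fun k => k / σ k - σ k / 2 with hX
  set Y : ℝ → ℝ := fun k => k / σ k + σ k / 2 with hYdef
  have hXeq : ∀ j, X j = j / σ j - σ j / 2 := fun j => by rw [hX]
  have hY : ∀ k, 0 < k → 0 < Y k := fun k hk => by
    have := hσ k
    show 0 < k / σ k + σ k / 2
    exact add_pos (div_pos hk this) (by linarith)
  have hYX : ∀ k, (Y k) ^ 2 = (X k) ^ 2 + 2 * k := fun k => by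
    show (k / σ k + σ k / 2) ^ 2 = (k / σ k - σ k / 2) ^ 2 + 2 * k
    field_simp [(hσ k).ne']
    ring
  have hYmX : ∀ k, Y k - X k = σ k := fun k => by
    show k / σ k + σ k / 2 - (k / σ k - σ k / 2) = σ k
    ring
  have hgid : ∀ k, Real.exp (-k) * gpdf (X k) = gpdf (Y k) := fun k => by
    rw [gpdf, gpdf, ← mul_div_assoc, ← Real.exp_add]
    have h2 : -k + -(X k ^ 2) / 2 = -(Y k ^ 2) / 2 := by
      linear_combination (hYX k) / 2
    rw [h2]
  have hPBS' : ∀ k, 0 < k →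
      P k = Real.exp (-k) * Phi (-(X k)) - Phi (-(Y k)) := fun k hk => hPBS k hk
  clear_value X Y
  clear hX hYdef hPBS
  have hYs : ∀ k, 0 < k → Real.sqrt (2 * k) ≤ Y k := by
    intro k hk
    rw [show Y k = Real.sqrt ((Y k) ^ 2) from (Real.sqrt_sq (hY k hk).le).symm]
    apply Real.sqrt_le_sqrt
    nlinarith [hYX k, sq_nonneg (X k)]
  -- Step A : eventually 1 < X k
  have hXgt1 : ∀ᶠ k in atTop, 1 < X k := by
    have hE1 : ∀ᶠ k in atTop, 1 + q / 2 < -Real.log (P k) / k :=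
      hL.eventually (eventually_gt_nhds (by linarith))
    have hE3 : ∀ᶠ k in atTop, 2 / Phi (-1) ≤ Real.sqrt (2 * Real.pi) * Real.sqrt (2 * k) := by
      filter_upwards [eventually_ge_atTop ((2 / Phi (-1)) ^ 2 / 2)] with k hk
      have h1 : 2 / Phi (-1) ≤ Real.sqrt (2 * k) := by
        calc 2 / Phi (-1) ≤ Real.sqrt ((2 / Phi (-1)) ^ 2) := by
              rw [Real.sqrt_sq_eq_abs]; exact le_abs_self _
          _ ≤ Real.sqrt (2 * k) := Real.sqrt_le_sqrt (by linarith)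
      nlinarith [one_le_sqrt2pi, Real.sqrt_nonneg (2 * k), div_pos two_pos Phi_neg_one_pos]
    have hE4 : ∀ᶠ k in atTop, -Real.log (Phi (-1) / 2) / k < q / 2 := by
      have : Tendsto (fun k : ℝ => -Real.log (Phi (-1) / 2) / k) atTop (𝓝 0) :=
        Tendsto.div_atTop tendsto_const_nhds tendsto_id
      exact this.eventually (eventually_lt_nhds (by linarith))
    filter_upwards [hE1, hE3, hE4, eventually_gt_atTop (0 : ℝ)] with k h1 h3 h4 hk0
    by_contra hcon
    push_neg at hcon
    -- Phi (-(Y k)) is small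
    have hYk := hY k hk0
    have hsk : 0 < Real.sqrt (2 * k) := Real.sqrt_pos.2 (by linarith)
    have m1 : Phi (-(Y k)) ≤ gpdf (Y k) / Y k := mills_upper hYk
    have m2 : gpdf (Y k) ≤ Real.exp (-k) / Real.sqrt (2 * Real.pi) := by
      rw [gpdf]
      gcongr
      nlinarith [hYX k, sq_nonneg (X k)]
    have m3 : gpdf (Y k) / Y k ≤ Real.exp (-k) / Real.sqrt (2 * Real.pi) / Real.sqrt (2 * k) :=
      div_le_div₀ (by positivity) m2 hsk (hYs k hk0)
    have m4 : Real.exp (-k) / Real.sqrt (2 * Real.pi) / Real.sqrt (2 * k)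
        ≤ Real.exp (-k) * (Phi (-1) / 2) := by
      rw [div_div, div_le_iff₀ (by positivity)]
      have hD : 2 / Phi (-1) ≤ Real.sqrt (2 * Real.pi) * Real.sqrt (2 * k) := h3
      have hphi := Phi_neg_one_pos
      rw [div_le_iff₀ hphi] at hD
      nlinarith [Real.exp_pos (-k)]
    have hPlb : Real.exp (-k) * (Phi (-1) / 2) ≤ P k := by
      rw [hPBS' k hk0]
      have hmono : Phi (-1) ≤ Phi (-(X k)) := Phi_mono (by linarith)
      have h5 := mul_le_mul_of_nonneg_left hmono (Real.exp_pos (-k)).le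
      have h6 := m1.trans (m3.trans m4)
      linarith
    have hphi2 : (0:ℝ) < Phi (-1) / 2 := by linarith [Phi_neg_one_pos]
    have hlog : -k + Real.log (Phi (-1) / 2) ≤ Real.log (P k) := by
      have := Real.log_le_log (mul_pos (Real.exp_pos _) hphi2) hPlb
      rwa [Real.log_mul (Real.exp_pos _).ne' hphi2.ne', Real.log_exp] at this
    have hLk : -Real.log (P k) / k ≤ 1 + -Real.log (Phi (-1) / 2) / k := by
      have hdiv : -Real.log (P k) / k ≤ (k + -Real.log (Phi (-1) / 2)) / k := by
        gcongr
        linarith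
      calc -Real.log (P k) / k ≤ _ := hdiv
        _ = 1 + -Real.log (Phi (-1) / 2) / k := by field_simp
    linarith [h1, hLk, h4]
  -- Step B : upper bound on X^2/(2k)
  have hXub : ∀ δ : ℝ, 0 < δ → ∀ᶠ k in atTop, (X k) ^ 2 / (2 * k) < q + δ := by
    intro δ hδ
    have hE : ∀ᶠ k in atTop, -Real.log (P k) / k < 1 + q + δ :=
      hL.eventually (eventually_lt_nhds (by linarith))
    filter_upwards [hXgt1, hE, eventually_gt_atTop (0 : ℝ)] with k hx1 hLk hk0
    have hXpos : 0 < X k := by linarith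
    have hub1 : P k ≤ Real.exp (-k) * (gpdf (X k) / X k) := by
      rw [hPBS' k hk0]
      have h5 := mul_le_mul_of_nonneg_left (mills_upper hXpos) (Real.exp_pos (-k)).le
      linarith [Phi_nonneg (-(Y k))]
    have hub2 : gpdf (X k) / X k ≤ Real.exp (-((X k) ^ 2) / 2) := by
      rw [gpdf, div_div]
      apply div_le_self (Real.exp_pos _).le
      nlinarith [one_le_sqrt2pi]
    have hub3 : P k ≤ Real.exp (-k + -((X k) ^ 2) / 2) := by
      rw [Real.exp_add]
      calc P k ≤ Real.exp (-k) * (gpdf (X k) / X k) := hub1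
        _ ≤ Real.exp (-k) * Real.exp (-((X k) ^ 2) / 2) := by
            exact mul_le_mul_of_nonneg_left hub2 (Real.exp_pos _).le
    have hlog : Real.log (P k) ≤ -k + -((X k) ^ 2) / 2 := by
      have := Real.log_le_log (hPpos k) hub3
      rwa [Real.log_exp] at this
    have hdiv : (k + (X k) ^ 2 / 2) / k ≤ -Real.log (P k) / k := by
      gcongr
      linarith
    have heq : (k + (X k) ^ 2 / 2) / k = 1 + (X k) ^ 2 / (2 * k) := by field_simp
    rw [heq] at hdiv
    linarith [hdiv, hLk]
  -- Step C : lower bound on X^2/(2k)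
  have hXlb : ∀ δ : ℝ, 0 < δ → ∀ᶠ k in atTop, q - δ < (X k) ^ 2 / (2 * k) := by
    intro δ hδ
    obtain ⟨A2, hA2⟩ : ∃ a : ℝ, a = 2 * q + 2 := ⟨_, rfl⟩
    obtain ⟨B2, hB2⟩ : ∃ a : ℝ, a = 2 * q + 4 := ⟨_, rfl⟩
    obtain ⟨c, hc⟩ : ∃ a : ℝ, a = 12 * A2 * B2 := ⟨_, rfl⟩
    have hA2pos : 0 < A2 := by rw [hA2]; linarith
    have hB2pos : 0 < B2 := by rw [hB2]; linarith
    have hcpos : 0 < c := by rw [hc]; positivity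
    have hE1 : ∀ᶠ k in atTop, 1 + q - δ / 2 < -Real.log (P k) / k :=
      hL.eventually (eventually_gt_nhds (by linarith))
    have hlogk : ∀ᶠ k in atTop, Real.log (c * k) / k < δ / 2 := by
      have h1 : Tendsto (fun k : ℝ => Real.log k / k) atTop (𝓝 0) :=
        Real.isLittleO_log_id_atTop.tendsto_div_nhds_zero
      have h2 : Tendsto (fun k : ℝ => Real.log c / k) atTop (𝓝 0) :=
        Tendsto.div_atTop tendsto_const_nhds tendsto_id
      have h3 := (h2.add h1).eventually (eventually_lt_nhds (by linarith : (0:ℝ) + 0 < δ / 2))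
      filter_upwards [h3, eventually_gt_atTop (0:ℝ)] with k hk hk0
      rwa [Real.log_mul hcpos.ne' hk0.ne', add_div]
    filter_upwards [hXgt1, hXub 1 one_pos, hE1, hlogk, eventually_ge_atTop (max 1 (4 * B2))]
      with k hx1 hxu hLk hlk hkB
    have hk1 : 1 ≤ k := le_trans (le_max_left _ _) hkB
    have hk4B : 4 * B2 ≤ k := le_trans (le_max_right _ _) hkB
    have hk0 : 0 < k := by linarith
    have hXpos : 0 < X k := by linarith
    have hYk := hY k hk0
    have hsk := hσ k
    -- basic bounds
    have hx2 : (X k) ^ 2 ≤ A2 * k := by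
      rw [div_lt_iff₀ (by linarith : 0 < 2 * k)] at hxu
      rw [hA2]; nlinarith
    have hy2 : (Y k) ^ 2 ≤ B2 * k := by rw [hYX k, hB2]; nlinarith
    obtain ⟨r, hr⟩ : ∃ r : ℝ, r = Real.sqrt (B2 * k) := ⟨_, rfl⟩
    have hr2 : r ^ 2 = B2 * k := by rw [hr]; exact Real.sq_sqrt (by positivity)
    have hrpos : 0 < r := by rw [hr]; exact Real.sqrt_pos.2 (by positivity)
    have hy_r : Y k ≤ r := by
      rw [hr, show Y k = Real.sqrt ((Y k) ^ 2) from (Real.sqrt_sq hYk.le).symm]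
      exact Real.sqrt_le_sqrt hy2
    have hr_k : r ≤ k / 2 := by
      rw [hr, show k / 2 = Real.sqrt ((k / 2) ^ 2) from
        (Real.sqrt_sq (by linarith)).symm]
      apply Real.sqrt_le_sqrt
      nlinarith
    have hxy_s : σ k * (X k + Y k) = 2 * k := by
      linear_combination (-(X k + Y k)) * (hYmX k) + hYX k
    have hXY2r : X k + Y k ≤ 2 * r := by
      have h1 := hYmX k
      linarith [hy_r, hsk]
    have hsr : k ≤ σ k * r := by
      nlinarith [hxy_s, mul_le_mul_of_nonneg_left hXY2r hsk.le]
    have hxsr : k ≤ X k * σ k * r := by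
      nlinarith [hsr, mul_nonneg (by linarith : (0:ℝ) ≤ X k - 1)
        (by nlinarith [hsr] : (0:ℝ) ≤ σ k * r)]
    have hxs2 : 2 ≤ X k * σ k := by
      have h2r : 2 * r ≤ k := by linarith
      nlinarith [hxsr, h2r, hrpos]
    -- the bracket bound
    have hbracket : 1 / (4 * A2 * B2 * k) ≤ X k / (1 + (X k) ^ 2) - 1 / Y k := by
      have he1 : X k / (1 + (X k) ^ 2) - 1 / Y k
          = (X k * σ k - 1) / ((1 + (X k) ^ 2) * Y k) := by
        have hyx : Y k = X k + σ k := by linarith [hYmX k]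
        have hne1 : (1:ℝ) + (X k) ^ 2 ≠ 0 := by positivity
        have hne2 : X k + σ k ≠ 0 := by nlinarith
        rw [hyx]
        field_simp
        ring
      rw [he1, div_le_div_iff₀ (by positivity) (by positivity)]
      have h1x2 : 1 + (X k) ^ 2 ≤ 2 * A2 * k := by nlinarith
      rw [one_mul]
      have hmulr : ((1 + (X k) ^ 2) * Y k) * r ≤ (X k * σ k - 1) * (4 * A2 * B2 * k) * r →
          (1 + (X k) ^ 2) * Y k ≤ (X k * σ k - 1) * (4 * A2 * B2 * k) :=
        fun h => le_of_mul_le_mul_right h hrpos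
      apply hmulr
      have s1 : ((1 + (X k) ^ 2) * Y k) * r ≤ 2 * A2 * k * (B2 * k) := by
        nlinarith [mul_le_mul h1x2 hy_r hYk.le (by positivity : (0:ℝ) ≤ 2 * A2 * k), hr2, hrpos]
      have h2xsr : k ≤ 2 * (X k * σ k - 1) * r := by
        nlinarith [hxsr, mul_nonneg (by linarith [hxs2] : (0:ℝ) ≤ X k * σ k - 2) hrpos.le]
      have s2 : 2 * A2 * B2 * k * k ≤ (X k * σ k - 1) * (4 * A2 * B2 * k) * r := by
        have hpos : (0:ℝ) < 2 * A2 * B2 * k := by positivity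
        nlinarith [mul_le_mul_of_nonneg_left h2xsr hpos.le]
      nlinarith [s1, s2]
    -- lower bound for P
    have hPlb : Real.exp (-((Y k) ^ 2) / 2) / (c * k) ≤ P k := by
      rw [hPBS' k hk0]
      have l1 : X k / (1 + (X k) ^ 2) * gpdf (X k) ≤ Phi (-(X k)) := mills_lower (X k)
      have l2 : Phi (-(Y k)) ≤ gpdf (Y k) / Y k := mills_upper hYk
      have l3 : gpdf (Y k) * (X k / (1 + (X k) ^ 2) - 1 / Y k)
          ≤ Real.exp (-k) * Phi (-(X k)) - Phi (-(Y k)) := by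
        have h1 := mul_le_mul_of_nonneg_left l1 (Real.exp_pos (-k)).le
        rw [mul_sub, mul_one_div]
        have e1 : Real.exp (-k) * (X k / (1 + (X k) ^ 2) * gpdf (X k))
            = gpdf (Y k) * (X k / (1 + (X k) ^ 2)) := by
          rw [← hgid k]; ring
        have hgy : gpdf (Y k) / Y k = gpdf (Y k) * (1 / Y k) := by ring
        linarith [l2, e1 ▸ h1]
      have l4 : Real.exp (-((Y k) ^ 2) / 2) / (c * k)
          ≤ gpdf (Y k) * (X k / (1 + (X k) ^ 2) - 1 / Y k) := by
        have g1 : Real.exp (-((Y k) ^ 2) / 2) / 3 ≤ gpdf (Y k) := by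
          rw [gpdf]
          gcongr
          exact sqrt2pi_le_3
        calc Real.exp (-((Y k) ^ 2) / 2) / (c * k)
            = (Real.exp (-((Y k) ^ 2) / 2) / 3) * (1 / (4 * A2 * B2 * k)) := by
              rw [hc]; field_simp; ring
          _ ≤ gpdf (Y k) * (X k / (1 + (X k) ^ 2) - 1 / Y k) := by
              apply mul_le_mul g1 hbracket (by positivity) (gpdf_pos _).le
      linarith
    have hlog : -((Y k) ^ 2) / 2 - Real.log (c * k) ≤ Real.log (P k) := by
      have := Real.log_le_log (by positivity) hPlb
      rwa [Real.log_div (Real.exp_pos _).ne' (by positivity), Real.log_exp] at this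
    have hdiv : -Real.log (P k) / k ≤ ((Y k) ^ 2 / 2 + Real.log (c * k)) / k := by
      gcongr
      linarith
    have heq2 : ((Y k) ^ 2 / 2 + Real.log (c * k)) / k
        = 1 + (X k) ^ 2 / (2 * k) + Real.log (c * k) / k := by
      rw [hYX k]; field_simp; ring
    rw [heq2] at hdiv
    linarith [hLk, hdiv, hlk]
  -- combine : X^2/(2k) → q
  have hu : Tendsto (fun k => (X k) ^ 2 / (2 * k)) atTop (𝓝 q) := by
    rw [tendsto_order]
    constructor
    · intro a ha
      filter_upwards [hXlb (q - a) (by linarith)] with k hk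
      linarith
    · intro a ha
      filter_upwards [hXub (a - q) (by linarith)] with k hk
      linarith
  have hpsi_cont : Continuous psi := by
    have : Continuous fun x : ℝ => Real.sqrt (x ^ 2 + x) :=
      Real.continuous_sqrt.comp ((continuous_pow 2).add continuous_id)
    unfold psi
    fun_prop
  have hcomp : Tendsto (fun k => psi ((X k) ^ 2 / (2 * k))) atTop (𝓝 (psi q)) :=
    (hpsi_cont.continuousAt.tendsto).comp hu
  apply hcomp.congr'
  filter_upwards [hXgt1, eventually_gt_atTop (0 : ℝ)] with k hx1 hk0
  rw [hXeq k]
  exact psi_eq hk0 (hσ k) (by rw [← hXeq k]; linarith)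


/-- **tail-wing formula, left wing.** If `F` is the distribution
function of risk-neutral log-returns with `∫ eˣ dF(x) = 1`, `V(k)` the implied
volatility, and `-log F(-k)/k → q*` with `q* ∈ (0,∞)`, then
`V(-k)²/k → ψ(q*)` as `k → ∞`. -/
theorem tail_wing_left
    (F : StieltjesFunction ℝ) (hprob : IsProbabilityMeasure F.measure)
    (hint : Integrable (fun x => Real.exp x) F.measure)
    (hmart : ∫ x, Real.exp x ∂F.measure = 1)
    (V : ℝ → ℝ)
    (hV : ∀ k, 0 < V k ∧
      cBS k (V k) = ∫ x in Set.Ioi k, (Real.exp x - Real.exp k) ∂F.measure)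
    (qstar : ℝ) (hq : 0 < qstar)
    (htail : Tendsto (fun k => -Real.log (F (-k)) / k) atTop (nhds qstar)) :
    Tendsto (fun k => (V (-k)) ^ 2 / k) atTop (nhds (psi qstar)) := by
  have hbot := F_tendsto_bot F qstar hq htail
  have hFpos : ∀ k : ℝ, 0 < F (-k) := F_pos F qstar hq htail
  have hIic : ∀ x : ℝ, (F.measure (Iic x)).toReal = F x := by
    intro x
    have h0 : (0:ℝ) ≤ F x := by
      have h := hFpos (-x)
      rw [neg_neg] at h
      exact h.le
    rw [F.measure_Iic hbot, sub_zero, ENNReal.toReal_ofReal h0]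
  obtain ⟨P, hPdef⟩ : ∃ P : ℝ → ℝ, P = fun k =>
      ∫ x in Iic (-k), (Real.exp (-k) - Real.exp x) ∂F.measure := ⟨_, rfl⟩
  have hub : ∀ k, P k ≤ Real.exp (-k) * F (-k) := fun k => by
    rw [hPdef]; exact put_upper hint k (F (-k)) (hIic _)
  have hlb : ∀ k m, k ≤ m → (Real.exp (-k) - Real.exp (-m)) * F (-m) ≤ P k := fun k m h => by
    rw [hPdef]; exact put_lower hint h (F (-m)) (hIic _)
  have hPpos : ∀ k, 0 < P k := by
    intro k
    have h := hlb k (k + 1) (by linarith)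
    have he : Real.exp (-(k+1)) < Real.exp (-k) := Real.exp_lt_exp.2 (by linarith)
    have h1 : 0 < (Real.exp (-k) - Real.exp (-(k+1))) * F (-(k+1)) :=
      mul_pos (by linarith) (hFpos _)
    linarith
  have hL : Tendsto (fun k => -Real.log (P k) / k) atTop (𝓝 (1 + qstar)) :=
    L_tendsto P (fun k => F (-k)) qstar hq hPpos (fun k => hFpos k) hub hlb htail
  have hPBS : ∀ k, 0 < k → P k = Real.exp (-k) * Phi (-(k / V (-k) - V (-k) / 2))
      - Phi (-(k / V (-k) + V (-k) / 2)) := by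
    intro k hk
    have h1 := (hV (-k)).2
    have hconst : Integrable (fun _ : ℝ => Real.exp (-k)) F.measure := integrable_const _
    have hf : Integrable (fun x => Real.exp x - Real.exp (-k)) F.measure := hint.sub hconst
    have hadd := intervalIntegral.integral_Iic_add_Ioi (b := -k)
      (f := fun x => Real.exp x - Real.exp (-k)) (μ := F.measure)
      hf.integrableOn hf.integrableOn
    have htot : ∫ x, (Real.exp x - Real.exp (-k)) ∂F.measure = 1 - Real.exp (-k) := by
      rw [integral_sub hint hconst, hmart, integral_const, probReal_univ]
      simp
    have hPneg : (∫ x in Iic (-k), (Real.exp x - Real.exp (-k)) ∂F.measure) = -P k := by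
      rw [hPdef, show (fun x => Real.exp x - Real.exp (-k))
        = fun x => -(Real.exp (-k) - Real.exp x) from funext fun x => by ring, integral_neg]
    have hIoi : (∫ x in Ioi (-k), (Real.exp x - Real.exp (-k)) ∂F.measure)
        = 1 - Real.exp (-k) + P k := by
      rw [htot] at hadd
      rw [hPneg] at hadd
      linarith
    have hcBS : cBS (-k) (V (-k)) = Phi (k / V (-k) + V (-k) / 2)
        - Real.exp (-k) * Phi (k / V (-k) - V (-k) / 2) := by
      rw [cBS]
      simp only [neg_neg]
    rw [h1, hIoi] at hcBS
    rw [Phi_neg, Phi_neg]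
    linarith
  have hBS := BS_side P (fun k => V (-k)) qstar hq (fun k => (hV (-k)).1) hPpos hPBS hL
  exact hBS
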